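/- arXiv:2502.18270 — 6 statements merged into one kernel-verified Lean document; each statement's English description precedes it below -/
import Mathlib

section
/- Let S be a K-convex monotone semigroup on X with S(t)0 ≥ 0 for all t ≥ 0. Then for all t ≥ 0 and all u, v ∈ X one has |S(t)u − v| ≤ |K(t)u − v| + |K(t)(−u) + v|, where |y| := y ⊔ (−y) denotes the lattice absolute value in Y. -/
open Filter Topology

/-- Let `S` be a `K`-convex monotone semigroup on a vector sublattice
`X ⊆ Y` (encoded via a linear lattice-order embedding `ι : X →ₗ[ℝ] Y`) with `S(t)0 ≥ 0`
for all `t ≥ 0`. Then for all `t ≥ 0` and `u, v ∈ X` one has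
`|S(t)u − v| ≤ |K(t)u − v| + |K(t)(−u) + v|`, where `|y| = y ⊔ (−y)` in `Y`. -/
theorem abs_S_sub_le_of_K_convex {X Y : Type*}
    [Lattice X] [AddCommGroup X] [Module ℝ X]
    [CovariantClass X X (· + ·) (· ≤ ·)] [PosSMulMono ℝ X]
    [Lattice Y] [AddCommGroup Y] [Module ℝ Y]
    [CovariantClass Y Y (· + ·) (· ≤ ·)] [PosSMulMono ℝ Y]
    (ι : X →ₗ[ℝ] Y)
    (hι_order : ∀ u v : X, u ≤ v ↔ ι u ≤ ι v)
    (hι_sup : ∀ u v : X, ι (u ⊔ v) = ι u ⊔ ι v)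
    (S : ℝ → X → X) (K : ℝ → X → Y)
    (hS0 : ∀ u : X, S 0 u = u)
    (hSsem : ∀ s t : ℝ, 0 ≤ s → 0 ≤ t → ∀ u : X, S t (S s u) = S (t + s) u)
    (hSmono : ∀ t : ℝ, 0 ≤ t → ∀ u v : X, u ≤ v → S t u ≤ S t v)
    (hKconv : ∀ t : ℝ, 0 ≤ t → ∀ u v : X, ∀ l : ℝ, l ∈ Set.Icc (0 : ℝ) 1 →
      ι (S t (l • u + (1 - l) • v)) ≤ l • ι (S t u) + (1 - l) • K t v)
    (hSpos : ∀ t : ℝ, 0 ≤ t → 0 ≤ S t 0) :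
    ∀ t : ℝ, 0 ≤ t → ∀ u v : X,
      (ι (S t u) - ι v) ⊔ (-(ι (S t u) - ι v)) ≤
        ((K t u - ι v) ⊔ (-(K t u - ι v))) + ((K t (-u) + ι v) ⊔ (-(K t (-u) + ι v))) := by
  intro t ht u v
  -- S(t)w ≤ K(t)w via λ = 0
  have h1 : ι (S t u) ≤ K t u := by
    have := hKconv t ht u u 0 ⟨le_refl 0, zero_le_one⟩
    simpa using this
  -- -S(t)u ≤ K(t)(-u) via λ = 1/2 with u, -u and S(t)0 ≥ 0
  have h2 : -(ι (S t u)) ≤ K t (-u) := by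
    have h3 := hKconv t ht u (-u) (1/2) ⟨by norm_num, by norm_num⟩
    have hz : ((1:ℝ)/2) • u + ((1:ℝ) - 1/2) • (-u) = 0 := by module
    rw [hz] at h3
    have h4 : (0 : Y) ≤ ι (S t 0) := by
      simpa using (hι_order 0 (S t 0)).mp (hSpos t ht)
    have h5 := h4.trans h3
    have h6 := smul_nonneg (by norm_num : (0:ℝ) ≤ 2) h5
    have h7 : (2:ℝ) • (((1:ℝ)/2) • ι (S t u) + ((1:ℝ) - 1/2) • K t (-u))
        = ι (S t u) + K t (-u) := by module
    rw [h7] at h6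
    exact neg_le_iff_add_nonneg.mpr (by rwa [add_comm])
  set a := ι (S t u) - ι v with ha
  set b := K t u - ι v with hb
  set c := K t (-u) + ι v with hc
  have hab : a ≤ b := sub_le_sub_right h1 _
  have hac : -a ≤ c := by
    have h := add_le_add_left h2 (ι v)
    rw [ha, hc, neg_sub]
    calc ι v - ι (S t u) = -ι (S t u) + ι v := by abel
      _ ≤ K t (-u) + ι v := h
  have hbnn : (0 : Y) ≤ b ⊔ -b := abs_nonneg b
  have hcnn : (0 : Y) ≤ c ⊔ -c := abs_nonneg c
  apply sup_le
  · calc a ≤ b := hab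
      _ ≤ b ⊔ -b := le_sup_left
      _ = (b ⊔ -b) + 0 := (add_zero _).symm
      _ ≤ (b ⊔ -b) + (c ⊔ -c) := add_le_add_right hcnn _
  · calc -a ≤ c := hac
      _ ≤ c ⊔ -c := le_sup_left
      _ = 0 + (c ⊔ -c) := (zero_add _).symm
      _ ≤ (b ⊔ -b) + (c ⊔ -c) := add_le_add_left hbnn _
end

section
/- Let S be a K-convex monotone semigroup on X with S(t)0 ≥ 0 for all t ≥ 0, and let p be a lattice seminorm on Y. Then for all t ≥ 0 and all u, v ∈ X one has p(S(t)u − v) ≤ p(K(t)u − v) + p(K(t)(−u) + v). -/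
open Filter Topology

private lemma aux_seminorm_sandwich {Y : Type*}
    [Lattice Y] [AddCommGroup Y] [Module ℝ Y]
    [CovariantClass Y Y (· + ·) (· ≤ ·)] [PosSMulMono ℝ Y]
    (p : Y → ℝ)
    (hp_add : ∀ y z : Y, p (y + z) ≤ p y + p z)
    (hp_lattice : ∀ y z : Y, y ⊔ (-y) ≤ z ⊔ (-z) → p y ≤ p z)
    {w a b : Y} (h1 : w ≤ a) (h2 : -b ≤ w) : p w ≤ p a + p b := by
  set A := a ⊔ (-a) with hA
  set B := b ⊔ (-b) with hB
  have habs_nonneg : ∀ y : Y, (0 : Y) ≤ y ⊔ (-y) := by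
    intro y
    have h2y : (0 : Y) ≤ (2:ℝ) • (y ⊔ (-y)) := by
      rw [two_smul]
      calc (0 : Y) = y + (-y) := by simp
        _ ≤ (y ⊔ (-y)) + (y ⊔ (-y)) := add_le_add le_sup_left le_sup_right
    have := smul_le_smul_of_nonneg_left h2y (by norm_num : (0:ℝ) ≤ 1/2)
    simpa [smul_smul, show (1/2 : ℝ) * 2 = 1 by norm_num] using this
  have hA0 : (0:Y) ≤ A := habs_nonneg a
  have hB0 : (0:Y) ≤ B := habs_nonneg b
  have hAB0 : (0:Y) ≤ A + B := add_nonneg hA0 hB0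
  -- |w| ≤ A + B
  have hwAB : w ⊔ (-w) ≤ A + B := by
    apply sup_le
    · calc w ≤ a := h1
        _ ≤ A := le_sup_left
        _ = A + 0 := by simp
        _ ≤ A + B := add_le_add_right hB0 _
    · calc -w ≤ b := neg_le.mp h2
        _ ≤ B := le_sup_left
        _ = 0 + B := by simp
        _ ≤ A + B := add_le_add_left hA0 _
  have hstep1 : p w ≤ p (A + B) := by
    apply hp_lattice
    calc w ⊔ (-w) ≤ A + B := hwAB
      _ ≤ (A + B) ⊔ (-(A + B)) := le_sup_left
  have hstep2 : p (A + B) ≤ p A + p B := hp_add A B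
  have hpa : p A ≤ p a := by
    apply hp_lattice
    have : A ⊔ (-A) ≤ A := sup_le le_rfl ((neg_nonpos.mpr hA0).trans hA0)
    simpa [hA] using this
  have hpb : p B ≤ p b := by
    apply hp_lattice
    have : B ⊔ (-B) ≤ B := sup_le le_rfl ((neg_nonpos.mpr hB0).trans hB0)
    simpa [hB] using this
  calc p w ≤ p (A + B) := hstep1
    _ ≤ p A + p B := hstep2
    _ ≤ p a + p b := add_le_add hpa hpb

/-- Let `S` be a `K`-convex monotone semigroup on a vector sublattice
`X ⊆ Y` (encoded via a linear lattice-order embedding `ι : X →ₗ[ℝ] Y`) with `S(t)0 ≥ 0`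
for all `t ≥ 0`, and let `p` be a lattice seminorm on `Y`. Then for all `t ≥ 0` and
`u, v ∈ X` one has `p(S(t)u − v) ≤ p(K(t)u − v) + p(K(t)(−u) + v)`. -/
theorem seminorm_S_sub_le_of_K_convex {X Y : Type*}
    [Lattice X] [AddCommGroup X] [Module ℝ X]
    [CovariantClass X X (· + ·) (· ≤ ·)] [PosSMulMono ℝ X]
    [Lattice Y] [AddCommGroup Y] [Module ℝ Y]
    [CovariantClass Y Y (· + ·) (· ≤ ·)] [PosSMulMono ℝ Y]
    (ι : X →ₗ[ℝ] Y)
    (hι_order : ∀ u v : X, u ≤ v ↔ ι u ≤ ι v)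
    (hι_sup : ∀ u v : X, ι (u ⊔ v) = ι u ⊔ ι v)
    (S : ℝ → X → X) (K : ℝ → X → Y)
    (hS0 : ∀ u : X, S 0 u = u)
    (hSsem : ∀ s t : ℝ, 0 ≤ s → 0 ≤ t → ∀ u : X, S t (S s u) = S (t + s) u)
    (hSmono : ∀ t : ℝ, 0 ≤ t → ∀ u v : X, u ≤ v → S t u ≤ S t v)
    (hKconv : ∀ t : ℝ, 0 ≤ t → ∀ u v : X, ∀ l : ℝ, l ∈ Set.Icc (0 : ℝ) 1 →
      ι (S t (l • u + (1 - l) • v)) ≤ l • ι (S t u) + (1 - l) • K t v)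
    (hSpos : ∀ t : ℝ, 0 ≤ t → 0 ≤ S t 0)
    (p : Y → ℝ)
    (hp_nonneg : ∀ y : Y, 0 ≤ p y)
    (hp_add : ∀ y z : Y, p (y + z) ≤ p y + p z)
    (hp_smul : ∀ (r : ℝ) (y : Y), p (r • y) = |r| * p y)
    (hp_lattice : ∀ y z : Y, y ⊔ (-y) ≤ z ⊔ (-z) → p y ≤ p z) :
    ∀ t : ℝ, 0 ≤ t → ∀ u v : X,
      p (ι (S t u) - ι v) ≤ p (K t u - ι v) + p (K t (-u) + ι v) := by
  intro t ht u v
  -- Step 1: ι (S t w) ≤ K t w for all w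
  have hSK : ∀ w : X, ι (S t w) ≤ K t w := by
    intro w
    have := hKconv t ht u w 0 ⟨le_refl 0, zero_le_one⟩
    simpa using this
  -- Step 2: -(K t (-u)) ≤ ι (S t u)
  have hlow : -(K t (-u)) ≤ ι (S t u) := by
    have hconv := hKconv t ht u (-u) (1/2) ⟨by norm_num, by norm_num⟩
    have hzero : (1/2 : ℝ) • u + (1 - 1/2 : ℝ) • (-u) = 0 := by
      norm_num
    rw [hzero] at hconv
    have h0 : (0 : Y) ≤ ι (S t 0) := by
      have := (hι_order 0 (S t 0)).mp (hSpos t ht)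
      simpa using this
    have hsum0 : (0 : Y) ≤ (1/2 : ℝ) • ι (S t u) + (1 - 1/2 : ℝ) • K t (-u) :=
      h0.trans hconv
    have h2 := smul_le_smul_of_nonneg_left hsum0 (by norm_num : (0:ℝ) ≤ 2)
    rw [smul_add, smul_smul, smul_smul] at h2
    norm_num at h2
    have := add_le_add_left h2 (-(K t (-u)))
    simpa [add_comm, add_left_comm] using this
  -- combine
  have h1 : ι (S t u) - ι v ≤ K t u - ι v := sub_le_sub_right (hSK u) _
  have h2 : -(K t (-u) + ι v) ≤ ι (S t u) - ι v := by
    have := add_le_add_right hlow (-ι v)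
    simpa [neg_add, sub_eq_add_neg] using this
  exact aux_seminorm_sandwich p hp_add hp_lattice h1 h2
end

section
/- Let S be a K-convex monotone semigroup on X with S(t)0 ≥ 0 for all t ≥ 0, where X is additionally a topological vector space. Let P be a family of lattice seminorms on Y, and assume K is strongly right-continuous with respect to P, i.e., for every p ∈ P, every sequence (t_n) ⊂ (0,∞) with t_n → 0, and every sequence (u_n) ⊂ X converging in X to some u₀ ∈ X, one has p(K(t_n)u_n − u₀) → 0. Then S is strongly right-continuous with respect to P: for every p ∈ P and all such sequences (t_n), (u_n), one has p(S(t_n)u_n − u₀) → 0. -/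
open Filter Topology

/-- Let `S` be a `K`-convex monotone semigroup on a vector sublattice
`X ⊆ Y` (encoded via a linear lattice-order embedding `ι : X →ₗ[ℝ] Y`) with `S(t)0 ≥ 0`
for all `t ≥ 0`, where `X` is a topological vector space. Let `P` be a family of lattice
seminorms on `Y` and suppose that `K` is strongly right-continuous w.r.t. `P`. Then `S`
is strongly right-continuous w.r.t. `P`. -/
theorem strong_right_continuity_of_K_convex {X Y : Type*}
    [Lattice X] [AddCommGroup X] [Module ℝ X]
    [CovariantClass X X (· + ·) (· ≤ ·)] [PosSMulMono ℝ X]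
    [TopologicalSpace X] [IsTopologicalAddGroup X] [ContinuousSMul ℝ X]
    [Lattice Y] [AddCommGroup Y] [Module ℝ Y]
    [CovariantClass Y Y (· + ·) (· ≤ ·)] [PosSMulMono ℝ Y]
    (ι : X →ₗ[ℝ] Y)
    (hι_order : ∀ u v : X, u ≤ v ↔ ι u ≤ ι v)
    (hι_sup : ∀ u v : X, ι (u ⊔ v) = ι u ⊔ ι v)
    (P : Set (Y → ℝ))
    (hP_nonneg : ∀ p ∈ P, ∀ y : Y, 0 ≤ p y)
    (hP_add : ∀ p ∈ P, ∀ y z : Y, p (y + z) ≤ p y + p z)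
    (hP_smul : ∀ p ∈ P, ∀ (r : ℝ) (y : Y), p (r • y) = |r| * p y)
    (hP_lattice : ∀ p ∈ P, ∀ y z : Y, y ⊔ (-y) ≤ z ⊔ (-z) → p y ≤ p z)
    (S : ℝ → X → X) (K : ℝ → X → Y)
    (hS0 : ∀ u : X, S 0 u = u)
    (hSsem : ∀ s t : ℝ, 0 ≤ s → 0 ≤ t → ∀ u : X, S t (S s u) = S (t + s) u)
    (hSmono : ∀ t : ℝ, 0 ≤ t → ∀ u v : X, u ≤ v → S t u ≤ S t v)
    (hKconv : ∀ t : ℝ, 0 ≤ t → ∀ u v : X, ∀ l : ℝ, l ∈ Set.Icc (0 : ℝ) 1 →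
      ι (S t (l • u + (1 - l) • v)) ≤ l • ι (S t u) + (1 - l) • K t v)
    (hSpos : ∀ t : ℝ, 0 ≤ t → 0 ≤ S t 0)
    (hKrc : ∀ p ∈ P, ∀ t : ℕ → ℝ, (∀ n, 0 < t n) → Tendsto t atTop (𝓝 0) →
      ∀ (u : ℕ → X) (u₀ : X), Tendsto u atTop (𝓝 u₀) →
        Tendsto (fun n => p (K (t n) (u n) - ι u₀)) atTop (𝓝 0)) :
    ∀ p ∈ P, ∀ t : ℕ → ℝ, (∀ n, 0 < t n) → Tendsto t atTop (𝓝 0) →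
      ∀ (u : ℕ → X) (u₀ : X), Tendsto u atTop (𝓝 u₀) →
        Tendsto (fun n => p (ι (S (t n) (u n)) - ι u₀)) atTop (𝓝 0) := by
  intro p hp t ht ht0 u u₀ hu
  have hneg : ∀ x y : Y, -x ≤ y → -y ≤ x := by
    intro x y h
    calc -y = -x + (x - y) := by abel
      _ ≤ y + (x - y) := add_le_add_left h _
      _ = x := by abel
  -- nonnegativity of "absolute value" in Y
  have habs : ∀ y : Y, (0:Y) ≤ y ⊔ (-y) := by
    intro y
    have h2 : (0:Y) ≤ (2:ℝ) • (y ⊔ (-y)) := by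
      have h := add_le_add (le_sup_left : y ≤ y ⊔ (-y)) (le_sup_right : -y ≤ y ⊔ (-y))
      simpa [two_smul] using h
    have := smul_le_smul_of_nonneg_left h2 (by norm_num : (0:ℝ) ≤ 1/2)
    simpa [smul_smul] using this
  -- upper bound: ι (S t u) ≤ K t u
  have ha : ∀ n, ι (S (t n) (u n)) ≤ K (t n) (u n) := by
    intro n
    have h := hKconv (t n) (ht n).le 0 (u n) 0 ⟨le_refl 0, zero_le_one⟩
    simpa using h
  -- lower bound: -(K t (-u)) ≤ ι (S t u)
  have hb : ∀ n, -(K (t n) (-(u n))) ≤ ι (S (t n) (u n)) := by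
    intro n
    have h := hKconv (t n) (ht n).le (u n) (-(u n)) (1/2) ⟨by norm_num, by norm_num⟩
    have harg : (1/2 : ℝ) • (u n) + (1 - 1/2 : ℝ) • (-(u n)) = 0 := by
      rw [show (1 - 1/2 : ℝ) = 1/2 by norm_num, ← smul_add]
      simp
    rw [harg] at h
    have h0 : (0:Y) ≤ ι (S (t n) 0) := by
      have := (hι_order 0 (S (t n) 0)).mp (hSpos (t n) (ht n).le)
      simpa using this
    have h1 : (0:Y) ≤ (1/2 : ℝ) • ι (S (t n) (u n)) + (1 - 1/2 : ℝ) • K (t n) (-(u n)) :=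
      h0.trans h
    have h2 := smul_le_smul_of_nonneg_left h1 (by norm_num : (0:ℝ) ≤ 2)
    rw [smul_zero, smul_add, smul_smul, smul_smul] at h2
    norm_num at h2
    have := add_le_add_right h2 (-(K (t n) (-(u n))))
    simpa using this
  -- key seminorm bound
  have hbound : ∀ n, p (ι (S (t n) (u n)) - ι u₀) ≤
      p (K (t n) (u n) - ι u₀) + p (K (t n) (-(u n)) - ι (-u₀)) := by
    intro n
    set d := ι (S (t n) (u n)) - ι u₀ with hd
    set a := K (t n) (u n) - ι u₀ with haa
    set b := K (t n) (-(u n)) - ι (-u₀) with hbb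
    have hda : d ≤ a := sub_le_sub_right (ha n) _
    have hdb : -d ≤ b := by
      have : -(ι (S (t n) (u n))) ≤ K (t n) (-(u n)) := by
        exact hneg _ _ (hb n)
      have h' := add_le_add_left this (ι u₀)
      have hbeq : b = K (t n) (-(u n)) + ι u₀ := by
        rw [hbb, map_neg, sub_neg_eq_add]
      rw [hbeq]
      calc -d = -(ι (S (t n) (u n))) + ι u₀ := by rw [hd]; abel
        _ ≤ K (t n) (-(u n)) + ι u₀ := h'
    set z := (a ⊔ (-a)) + (b ⊔ (-b)) with hz
    have hz0 : (0:Y) ≤ z := add_nonneg (habs a) (habs b)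
    have hdz : d ⊔ (-d) ≤ z ⊔ (-z) := by
      have h1 : d ≤ z := by
        calc d ≤ a := hda
          _ ≤ a ⊔ (-a) := le_sup_left
          _ ≤ z := le_add_of_nonneg_right (habs b)
      have h2 : -d ≤ z := by
        calc -d ≤ b := hdb
          _ ≤ b ⊔ (-b) := le_sup_left
          _ ≤ z := le_add_of_nonneg_left (habs a)
      exact (sup_le h1 h2).trans le_sup_left
    have hp1 : p d ≤ p z := hP_lattice p hp d z hdz
    have hp2 : p z ≤ p (a ⊔ (-a)) + p (b ⊔ (-b)) := hP_add p hp _ _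
    have habs_eq : ∀ y : Y, p (y ⊔ (-y)) ≤ p y := by
      intro y
      apply hP_lattice p hp
      have : (y ⊔ (-y)) ⊔ (-(y ⊔ (-y))) = y ⊔ (-y) := by
        apply sup_eq_left.mpr
        have hn : -(y ⊔ (-y)) ≤ 0 := hneg _ _ (by simpa using habs y)
        exact hn.trans (habs y)
      rw [this]
    calc p d ≤ p z := hp1
      _ ≤ p (a ⊔ (-a)) + p (b ⊔ (-b)) := hp2
      _ ≤ p a + p b := add_le_add (habs_eq a) (habs_eq b)
  have hA := hKrc p hp t ht ht0 u u₀ hu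
  have hB := hKrc p hp t ht ht0 (fun n => -(u n)) (-u₀) hu.neg
  have hsum : Tendsto (fun n => p (K (t n) (u n) - ι u₀) +
      p (K (t n) (-(u n)) - ι (-u₀))) atTop (𝓝 0) := by
    simpa using hA.add hB
  exact squeeze_zero (fun n => hP_nonneg p hp _) hbound hsum
end

section
/- Let S be a K-convex monotone semigroup on X with S(t)0 ≥ 0 for all t ≥ 0, where X is a topological vector space, P is a family of lattice seminorms on Y, and K is strongly right-continuous with respect to P (for every p ∈ P, every sequence t_n → 0 with t_n > 0, and every sequence u_n → u₀ in X, p(K(t_n)u_n − u₀) → 0). Then for every u₀ ∈ X, every t ≥ 0, every p ∈ P, and every sequence (h_n) ⊂ (0,∞) with h_n → 0, one has p(S(t + h_n)u₀ − S(t)u₀) → 0; that is, the trajectory s ↦ S(s)u₀ is right-continuous with respect to the seminorms in P. -/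
open Filter Topology

set_option linter.unusedSectionVars false

section aux
variable {Y : Type*} [Lattice Y] [AddCommGroup Y] [Module ℝ Y]
  [CovariantClass Y Y (· + ·) (· ≤ ·)] [PosSMulMono ℝ Y]

lemma aux_nonneg_of_add_self (a : Y) (h : 0 ≤ a + a) : 0 ≤ a := by
  have h2 := smul_le_smul_of_nonneg_left h (by norm_num : (0:ℝ) ≤ 1/2)
  rw [smul_zero, smul_add, ← add_smul] at h2
  norm_num at h2
  exact h2

lemma aux_abs_nonneg (a : Y) : 0 ≤ a ⊔ (-a) := by
  apply aux_nonneg_of_add_self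
  calc (0:Y) = a + (-a) := by abel
  _ ≤ (a ⊔ -a) + (a ⊔ -a) := add_le_add le_sup_left le_sup_right

lemma aux_seminorm_bound (p : Y → ℝ)
    (hadd : ∀ y z : Y, p (y + z) ≤ p y + p z)
    (hlat : ∀ y z : Y, y ⊔ (-y) ≤ z ⊔ (-z) → p y ≤ p z)
    (x y z : Y) (hxy : x ≤ y) (hzx : -z ≤ x) :
    p x ≤ p y + p z := by
  set Y' := y ⊔ (-y) with hY'
  set Z' := z ⊔ (-z) with hZ'
  have hY : (0:Y) ≤ Y' := aux_abs_nonneg y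
  have hZ : (0:Y) ≤ Z' := aux_abs_nonneg z
  have h1 : x ⊔ (-x) ≤ Y' + Z' := by
    apply sup_le
    · exact (hxy.trans le_sup_left).trans (le_add_of_nonneg_right hZ)
    · have hx : -x ≤ z := neg_le.mp hzx
      exact (hx.trans le_sup_left).trans (le_add_of_nonneg_left hY)
  have h2 : p x ≤ p (Y' + Z') := hlat x (Y' + Z') (h1.trans le_sup_left)
  have h3 : p (Y' + Z') ≤ p Y' + p Z' := hadd _ _
  have h4 : p Y' ≤ p y := hlat Y' y (sup_le le_rfl ((neg_nonpos.mpr hY).trans hY))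
  have h5 : p Z' ≤ p z := hlat Z' z (sup_le le_rfl ((neg_nonpos.mpr hZ).trans hZ))
  linarith

end aux

/-- Let `S` be a `K`-convex monotone semigroup on a vector sublattice
`X ⊆ Y` (encoded via a linear lattice-order embedding `ι : X →ₗ[ℝ] Y`) with `S(t)0 ≥ 0`
for all `t ≥ 0`, `X` a topological vector space, `P` a family of lattice seminorms on `Y`,
and `K` strongly right-continuous w.r.t. `P`. Then for every `u₀ ∈ X`, `t ≥ 0`, `p ∈ P`,
and every sequence `h_n > 0` with `h_n → 0`, one has `p(S(t + h_n)u₀ − S(t)u₀) → 0`;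
i.e., the trajectory `s ↦ S(s)u₀` is right-continuous w.r.t. the seminorms in `P`. -/
theorem trajectory_right_continuity_of_K_convex {X Y : Type*}
    [Lattice X] [AddCommGroup X] [Module ℝ X]
    [CovariantClass X X (· + ·) (· ≤ ·)] [PosSMulMono ℝ X]
    [TopologicalSpace X] [IsTopologicalAddGroup X] [ContinuousSMul ℝ X]
    [Lattice Y] [AddCommGroup Y] [Module ℝ Y]
    [CovariantClass Y Y (· + ·) (· ≤ ·)] [PosSMulMono ℝ Y]
    (ι : X →ₗ[ℝ] Y)
    (hι_order : ∀ u v : X, u ≤ v ↔ ι u ≤ ι v)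
    (hι_sup : ∀ u v : X, ι (u ⊔ v) = ι u ⊔ ι v)
    (P : Set (Y → ℝ))
    (hP_nonneg : ∀ p ∈ P, ∀ y : Y, 0 ≤ p y)
    (hP_add : ∀ p ∈ P, ∀ y z : Y, p (y + z) ≤ p y + p z)
    (hP_smul : ∀ p ∈ P, ∀ (r : ℝ) (y : Y), p (r • y) = |r| * p y)
    (hP_lattice : ∀ p ∈ P, ∀ y z : Y, y ⊔ (-y) ≤ z ⊔ (-z) → p y ≤ p z)
    (S : ℝ → X → X) (K : ℝ → X → Y)
    (hS0 : ∀ u : X, S 0 u = u)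
    (hSsem : ∀ s t : ℝ, 0 ≤ s → 0 ≤ t → ∀ u : X, S t (S s u) = S (t + s) u)
    (hSmono : ∀ t : ℝ, 0 ≤ t → ∀ u v : X, u ≤ v → S t u ≤ S t v)
    (hKconv : ∀ t : ℝ, 0 ≤ t → ∀ u v : X, ∀ l : ℝ, l ∈ Set.Icc (0 : ℝ) 1 →
      ι (S t (l • u + (1 - l) • v)) ≤ l • ι (S t u) + (1 - l) • K t v)
    (hSpos : ∀ t : ℝ, 0 ≤ t → 0 ≤ S t 0)
    (hKrc : ∀ p ∈ P, ∀ t : ℕ → ℝ, (∀ n, 0 < t n) → Tendsto t atTop (𝓝 0) →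
      ∀ (u : ℕ → X) (u₀ : X), Tendsto u atTop (𝓝 u₀) →
        Tendsto (fun n => p (K (t n) (u n) - ι u₀)) atTop (𝓝 0)) :
    ∀ (u₀ : X) (t : ℝ), 0 ≤ t → ∀ p ∈ P, ∀ h : ℕ → ℝ,
      (∀ n, 0 < h n) → Tendsto h atTop (𝓝 0) →
      Tendsto (fun n => p (ι (S (t + h n) u₀) - ι (S t u₀))) atTop (𝓝 0) := by
  intro u₀ t ht p hp h hpos hlim
  set v := S t u₀ with hv
  have hsem : ∀ n, S (t + h n) u₀ = S (h n) v := by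
    intro n
    rw [hv, hSsem t (h n) ht (hpos n).le u₀, add_comm]
  -- upper bound
  have hup : ∀ n, ι (S (h n) v) ≤ K (h n) v := by
    intro n
    have hc := hKconv (h n) (hpos n).le 0 v 0 ⟨le_rfl, zero_le_one⟩
    simpa using hc
  -- lower bound
  have hlow : ∀ n, -(K (h n) (-v)) ≤ ι (S (h n) v) := by
    intro n
    have hc := hKconv (h n) (hpos n).le v (-v) (1/2) ⟨by norm_num, by norm_num⟩
    have harg : (1/2:ℝ) • v + ((1:ℝ) - 1/2) • (-v) = 0 := by
      module
    rw [harg] at hc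
    have h0 : (0:Y) ≤ ι (S (h n) 0) := by
      rw [← map_zero ι]
      exact (hι_order 0 (S (h n) 0)).mp (hSpos (h n) (hpos n).le)
    have hsum := h0.trans hc
    have h2 := smul_le_smul_of_nonneg_left hsum (by norm_num : (0:ℝ) ≤ 2)
    rw [smul_zero, smul_add] at h2
    norm_num [smul_smul] at h2
    calc -(K (h n) (-v)) = -(K (h n) (-v)) + 0 := by abel
    _ ≤ -(K (h n) (-v)) + (ι (S (h n) v) + K (h n) (-v)) := add_le_add_right h2 _
    _ = ι (S (h n) v) := by abel
  -- key estimate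
  have key : ∀ n, p (ι (S (t + h n) u₀) - ι v) ≤
      p (K (h n) v - ι v) + p (K (h n) (-v) - ι (-v)) := by
    intro n
    rw [hsem n]
    apply aux_seminorm_bound p (hP_add p hp) (hP_lattice p hp)
    · exact sub_le_sub_right (hup n) _
    · have h1 : -(K (h n) (-v)) - ι v ≤ ι (S (h n) v) - ι v :=
        sub_le_sub_right (hlow n) _
      calc -(K (h n) (-v) - ι (-v)) = -(K (h n) (-v)) - ι v := by
            rw [map_neg]; abel
      _ ≤ ι (S (h n) v) - ι v := h1
  have hy := hKrc p hp h hpos hlim (fun _ => v) v tendsto_const_nhds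
  have hz := hKrc p hp h hpos hlim (fun _ => -v) (-v) tendsto_const_nhds
  have hsum : Tendsto (fun n => p (K (h n) v - ι v) + p (K (h n) (-v) - ι (-v)))
      atTop (𝓝 0) := by
    simpa using hy.add hz
  exact squeeze_zero (fun n => hP_nonneg p hp _) (fun n => key n) hsum
end

section
/- (Viscosity subsolution property of the semigroup trajectory.) Let S be a K-convex monotone semigroup on X with S(t)0 ≥ 0 for all t ≥ 0, where X and Y are topological vector spaces, the inclusion X → Y is sequentially continuous, the topology of Y is induced by a family of lattice seminorms, and K is strongly right-continuous (for every sequence t_n → 0 with t_n > 0 and every sequence u_n → u₀ in X, K(t_n)u_n → u₀ in Y). Let μ : Y → ℝ be a linear, sequentially continuous, positive functional (μ(y) ≥ 0 whenever y ≥ 0). Fix u₀ ∈ X and set u(s) := S(s)u₀ for s ≥ 0. Let t > 0 and let φ : (0,∞) → X be a function that is differentiable at t, i.e., there is φ'(t) ∈ X such that for every sequence h_n → 0 with h_n ≠ 0 and t + h_n > 0, (φ(t + h_n) − φ(t))/h_n → φ'(t) in X. Assume there exists Lφ(t) ∈ Y such that (S(h)φ(t) − φ(t))/h → Lφ(t)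 in Y as h ↓ 0 (along every sequence h_n ↓ 0). If μ(φ(t)) = μ(u(t)) and φ(s) ≥ u(s) for all s > 0, then μ(φ'(t)) ≤ μ(Lφ(t)). -/
open Filter Topology

/-- (Viscosity subsolution property of the semigroup trajectory.)
`X ⊆ Y` are vector lattices (the inclusion is encoded via a linear lattice-order embedding
`ι : X →ₗ[ℝ] Y`); `X` is a topological vector space; the topology of `Y` is induced by a
family `P` of lattice seminorms, so that sequential convergence in `Y` means convergence of
all the seminorms of `P` of the differences; the inclusion `X → Y` is sequentially continuous;
`S` is a `K`-convex monotone semigroup with `S(t)0 ≥ 0` and strongly right-continuous `K`;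
`μ` is a linear, positive, sequentially continuous functional on `Y`. If `φ` is differentiable
at `t > 0` with derivative `φ'`, `φ(t)` lies in the domain of the generator of `S` at `t`
(with value `Lφ`), `μ(φ(t)) = μ(S(t)u₀)`, and `φ(s) ≥ S(s)u₀` for all `s > 0`, then
`μ(φ') ≤ μ(Lφ)`. -/
theorem viscosity_subsolution_of_K_convex {X Y : Type*}
    [Lattice X] [AddCommGroup X] [Module ℝ X]
    [CovariantClass X X (· + ·) (· ≤ ·)] [PosSMulMono ℝ X]
    [TopologicalSpace X] [IsTopologicalAddGroup X] [ContinuousSMul ℝ X]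
    [Lattice Y] [AddCommGroup Y] [Module ℝ Y]
    [CovariantClass Y Y (· + ·) (· ≤ ·)] [PosSMulMono ℝ Y]
    (ι : X →ₗ[ℝ] Y)
    (hι_order : ∀ u v : X, u ≤ v ↔ ι u ≤ ι v)
    (hι_sup : ∀ u v : X, ι (u ⊔ v) = ι u ⊔ ι v)
    (P : Set (Y → ℝ))
    (hP_nonneg : ∀ p ∈ P, ∀ y : Y, 0 ≤ p y)
    (hP_add : ∀ p ∈ P, ∀ y z : Y, p (y + z) ≤ p y + p z)
    (hP_smul : ∀ p ∈ P, ∀ (r : ℝ) (y : Y), p (r • y) = |r| * p y)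
    (hP_lattice : ∀ p ∈ P, ∀ y z : Y, y ⊔ (-y) ≤ z ⊔ (-z) → p y ≤ p z)
    (hι_seqcont : ∀ (u : ℕ → X) (u₀ : X), Tendsto u atTop (𝓝 u₀) →
      ∀ p ∈ P, Tendsto (fun n => p (ι (u n) - ι u₀)) atTop (𝓝 0))
    (S : ℝ → X → X) (K : ℝ → X → Y)
    (hS0 : ∀ u : X, S 0 u = u)
    (hSsem : ∀ s t : ℝ, 0 ≤ s → 0 ≤ t → ∀ u : X, S t (S s u) = S (t + s) u)
    (hSmono : ∀ t : ℝ, 0 ≤ t → ∀ u v : X, u ≤ v → S t u ≤ S t v)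
    (hKconv : ∀ t : ℝ, 0 ≤ t → ∀ u v : X, ∀ l : ℝ, l ∈ Set.Icc (0 : ℝ) 1 →
      ι (S t (l • u + (1 - l) • v)) ≤ l • ι (S t u) + (1 - l) • K t v)
    (hSpos : ∀ t : ℝ, 0 ≤ t → 0 ≤ S t 0)
    (hKrc : ∀ t : ℕ → ℝ, (∀ n, 0 < t n) → Tendsto t atTop (𝓝 0) →
      ∀ (u : ℕ → X) (u₀ : X), Tendsto u atTop (𝓝 u₀) →
      ∀ p ∈ P, Tendsto (fun n => p (K (t n) (u n) - ι u₀)) atTop (𝓝 0))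
    (μ : Y →ₗ[ℝ] ℝ)
    (hμpos : ∀ y : Y, 0 ≤ y → 0 ≤ μ y)
    (hμcont : ∀ (y : ℕ → Y) (y₀ : Y),
      (∀ p ∈ P, Tendsto (fun n => p (y n - y₀)) atTop (𝓝 0)) →
      Tendsto (fun n => μ (y n)) atTop (𝓝 (μ y₀)))
    (u₀ : X) (t : ℝ) (ht : 0 < t)
    (φ : ℝ → X) (φ' : X)
    (hφdiff : ∀ h : ℕ → ℝ, (∀ n, h n ≠ 0 ∧ 0 < t + h n) → Tendsto h atTop (𝓝 0) →
      Tendsto (fun n => (h n)⁻¹ • (φ (t + h n) - φ t)) atTop (𝓝 φ'))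
    (Lφ : Y)
    (hLφ : ∀ h : ℕ → ℝ, (∀ n, 0 < h n) → Tendsto h atTop (𝓝 0) →
      ∀ p ∈ P, Tendsto
        (fun n => p ((h n)⁻¹ • (ι (S (h n) (φ t)) - ι (φ t)) - Lφ)) atTop (𝓝 0))
    (htouch : μ (ι (φ t)) = μ (ι (S t u₀)))
    (habove : ∀ s : ℝ, 0 < s → S s u₀ ≤ φ s) :
    μ (ι φ') ≤ μ Lφ := by

  -- helper: μ is monotone
  have hμmono : ∀ a b : Y, a ≤ b → μ a ≤ μ b := by
    intro a b hab
    have h2 : 0 ≤ μ (b - a) := hμpos _ (sub_nonneg.2 hab)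
    rw [map_sub] at h2; linarith
  -- the sequence of time steps
  set c : ℝ := min t 1 with hc
  have hcpos : 0 < c := lt_min ht one_pos
  set h : ℕ → ℝ := fun n => c / (n + 2) with hh
  have hhpos : ∀ n, 0 < h n := fun n => div_pos hcpos (by positivity)
  have hhlt : ∀ n, h n < t ∧ h n < 1 := by
    intro n
    have h0 : (0:ℝ) ≤ (n:ℝ) := Nat.cast_nonneg n
    have h1 : h n ≤ c / 2 := by
      show c / ((n:ℝ) + 2) ≤ c / 2
      gcongr
      linarith
    have ht' : c ≤ t := min_le_left t 1
    have h1' : c ≤ 1 := min_le_right t 1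
    constructor <;> linarith
  have htend0 : Tendsto h atTop (𝓝 0) := by
    have h1 : Tendsto (fun n : ℕ => ((n:ℝ) + 2)) atTop atTop :=
      tendsto_atTop_add_const_right atTop 2 tendsto_natCast_atTop_atTop
    have h2 : Tendsto (fun n : ℕ => ((n:ℝ) + 2)⁻¹) atTop (𝓝 0) := h1.inv_tendsto_atTop
    have := h2.const_mul c
    simpa [hh, div_eq_mul_inv] using this
  -- difference quotients of φ
  set ψ : ℕ → X := fun n => (h n)⁻¹ • (φ t - φ (t - h n)) with hψ
  have hψconv : Tendsto ψ atTop (𝓝 φ') := by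
    have hcond : ∀ n, (-(h n)) ≠ 0 ∧ 0 < t + (-(h n)) := by
      intro n; exact ⟨neg_ne_zero.2 (hhpos n).ne', by have := (hhlt n).1; linarith⟩
    have hneg : Tendsto (fun n => -(h n)) atTop (𝓝 0) := by
      simpa using htend0.neg
    have := hφdiff (fun n => -(h n)) hcond hneg
    have heq : ∀ n, (-(h n))⁻¹ • (φ (t + -(h n)) - φ t) = ψ n := by
      intro n
      rw [show t + -(h n) = t - h n from by ring, hψ]
      rw [inv_neg, neg_smul, ← smul_neg, neg_sub]
    simpa only [heq] using this
  set w : ℕ → X := fun n => φ t - ψ n with hw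
  have hwconv : Tendsto w atTop (𝓝 (φ t - φ')) := tendsto_const_nhds.sub hψconv
  -- the key elements
  set D : ℕ → Y := fun n => (h n)⁻¹ • (ι (S (h n) (φ t)) - ι (φ t)) with hD
  set y : ℕ → Y := fun n => (1 - h n) • D n + (K (h n) (w n) - ι (φ t)) with hy
  -- positivity of μ (y n)
  have hpos : ∀ n, 0 ≤ μ (y n) := by
    intro n
    obtain ⟨hlt_t, hlt_1⟩ := hhlt n
    have hne : h n ≠ 0 := (hhpos n).ne'
    -- S t u₀ ≤ S (h n) (φ (t - h n))
    have h1 : S t u₀ ≤ S (h n) (φ (t - h n)) := by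
      have hmono := hSmono (h n) (hhpos n).le _ _ (habove (t - h n) (by linarith))
      have hsem := hSsem (t - h n) (h n) (by linarith) (hhpos n).le u₀
      rw [hsem, show h n + (t - h n) = t from by ring] at hmono
      exact hmono
    -- convexity
    have hsplit : (1 - h n) • φ t + (1 - (1 - h n)) • w n = φ (t - h n) := by
      have hs : h n • ψ n = φ t - φ (t - h n) := smul_inv_smul₀ hne _
      rw [show (1 - (1 - h n)) = h n from by ring, hw]
      simp only [smul_sub, hs, sub_smul, one_smul]
      abel
    have h2 := hKconv (h n) (hhpos n).le (φ t) (w n) (1 - h n)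
      ⟨by linarith [hhpos n], by linarith [hhpos n]⟩
    rw [hsplit, show (1 - (1 - h n)) = h n from by ring] at h2
    -- the chain of inequalities for μ
    have h3 : μ (ι (φ t)) ≤ (1 - h n) * μ (ι (S (h n) (φ t))) + h n * μ (K (h n) (w n)) := by
      calc μ (ι (φ t)) = μ (ι (S t u₀)) := htouch
        _ ≤ μ (ι (S (h n) (φ (t - h n)))) := hμmono _ _ ((hι_order _ _).1 h1)
        _ ≤ μ ((1 - h n) • ι (S (h n) (φ t)) + h n • K (h n) (w n)) := hμmono _ _ h2
        _ = (1 - h n) * μ (ι (S (h n) (φ t))) + h n * μ (K (h n) (w n)) := by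
            rw [map_add, map_smul, map_smul, smul_eq_mul, smul_eq_mul]
    have hexp : μ (y n) = (1 - h n) * ((h n)⁻¹ * (μ (ι (S (h n) (φ t))) - μ (ι (φ t))))
        + (μ (K (h n) (w n)) - μ (ι (φ t))) := by
      simp only [hy, hD, map_add, map_smul, map_sub, smul_eq_mul]
    rw [hexp]
    have heq2 : (1 - h n) * ((h n)⁻¹ * (μ (ι (S (h n) (φ t))) - μ (ι (φ t))))
        + (μ (K (h n) (w n)) - μ (ι (φ t)))
        = (h n)⁻¹ * ((1 - h n) * μ (ι (S (h n) (φ t))) + h n * μ (K (h n) (w n))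
            - μ (ι (φ t))) := by
      field_simp
      ring
    rw [heq2]
    exact mul_nonneg (inv_nonneg.2 (hhpos n).le) (by linarith)
  -- convergence of y n to Lφ - ι φ'
  have hkey : ∀ n, y n - (Lφ - ι φ')
      = (1 - h n) • (D n - Lφ) + ((K (h n) (w n) - ι (φ t - φ')) + (-(h n)) • Lφ) := by
    intro n
    simp only [hy, hD, map_sub]
    module
  have hyconv : ∀ p ∈ P, Tendsto (fun n => p (y n - (Lφ - ι φ'))) atTop (𝓝 0) := by
    intro p hp
    have hbd : ∀ n, p (y n - (Lφ - ι φ'))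
        ≤ |1 - h n| * p (D n - Lφ)
          + (p (K (h n) (w n) - ι (φ t - φ')) + h n * p Lφ) := by
      intro n
      rw [hkey n]
      calc p ((1 - h n) • (D n - Lφ) + ((K (h n) (w n) - ι (φ t - φ')) + (-(h n)) • Lφ))
          ≤ p ((1 - h n) • (D n - Lφ))
            + p ((K (h n) (w n) - ι (φ t - φ')) + (-(h n)) • Lφ) := hP_add p hp _ _
        _ ≤ p ((1 - h n) • (D n - Lφ))
            + (p (K (h n) (w n) - ι (φ t - φ')) + p ((-(h n)) • Lφ)) := by
              have := hP_add p hp (K (h n) (w n) - ι (φ t - φ')) ((-(h n)) • Lφ)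
              linarith
        _ = |1 - h n| * p (D n - Lφ)
            + (p (K (h n) (w n) - ι (φ t - φ')) + h n * p Lφ) := by
              rw [hP_smul p hp, hP_smul p hp, abs_neg, abs_of_pos (hhpos n)]
    have hb1 : Tendsto (fun n => |1 - h n| * p (D n - Lφ)) atTop (𝓝 0) := by
      have t1 : Tendsto (fun n => |1 - h n|) atTop (𝓝 1) := by
        have : Tendsto (fun n => 1 - h n) atTop (𝓝 1) := by
          simpa using (tendsto_const_nhds.sub htend0 :
            Tendsto (fun n => (1:ℝ) - h n) atTop (𝓝 (1 - 0)))
        have := (continuous_abs.tendsto (1:ℝ)).comp this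
        simpa [Function.comp_def] using this
      have t2 : Tendsto (fun n => p (D n - Lφ)) atTop (𝓝 0) :=
        hLφ h hhpos htend0 p hp
      simpa using t1.mul t2
    have hb2 : Tendsto (fun n => p (K (h n) (w n) - ι (φ t - φ'))) atTop (𝓝 0) :=
      hKrc h hhpos htend0 w (φ t - φ') hwconv p hp
    have hb3 : Tendsto (fun n => h n * p Lφ) atTop (𝓝 0) := by
      simpa using htend0.mul_const (p Lφ)
    have hsum : Tendsto (fun n => |1 - h n| * p (D n - Lφ)
        + (p (K (h n) (w n) - ι (φ t - φ')) + h n * p Lφ)) atTop (𝓝 0) := by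
      simpa using hb1.add (hb2.add hb3)
    exact squeeze_zero (fun n => hP_nonneg p hp _) hbd hsum
  have hμy : Tendsto (fun n => μ (y n)) atTop (𝓝 (μ (Lφ - ι φ'))) :=
    hμcont y (Lφ - ι φ') hyconv
  have hfin : 0 ≤ μ (Lφ - ι φ') := ge_of_tendsto' hμy hpos
  rw [map_sub] at hfin
  linarith
end

section
/- (Viscosity supersolution property of the semigroup trajectory.) Let S be a K-convex monotone semigroup on X with S(t)0 ≥ 0 for all t ≥ 0, where X and Y are topological vector spaces, the inclusion X → Y is sequentially continuous, the topology of Y is induced by a family of lattice seminorms, and K is strongly right-continuous (for every sequence t_n → 0 with t_n > 0 and every sequence u_n → u₀ in X, K(t_n)u_n → u₀ in Y). Let μ : Y → ℝ be a linear, sequentially continuous, positive functional (μ(y) ≥ 0 whenever y ≥ 0). Fix u₀ ∈ X and set u(s) := S(s)u₀ for s ≥ 0. Let t > 0 and let φ : (0,∞) → X be a function that is differentiable at t, i.e., there is φ'(t) ∈ X such that for every sequence h_n → 0 with h_n ≠ 0 and t + h_n > 0, (φ(t + h_n) − φ(t))/h_n → φ'(t) in X. Assume there exists Lφ(t) ∈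 Y such that (S(h)φ(t) − φ(t))/h → Lφ(t) in Y as h ↓ 0 (along every sequence h_n ↓ 0). If μ(φ(t)) = μ(u(t)) and φ(s) ≤ u(s) for all s > 0, then μ(φ'(t)) ≥ μ(Lφ(t)). -/
open Filter Topology

/-- (Viscosity supersolution property of the semigroup trajectory.)
`X ⊆ Y` are vector lattices (the inclusion is encoded via a linear lattice-order embedding
`ι : X →ₗ[ℝ] Y`); `X` is a topological vector space; the topology of `Y` is induced by a
family `P` of lattice seminorms, so that sequential convergence in `Y` means convergence of
all the seminorms of `P` of the differences; the inclusion `X → Y` is sequentially continuous;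
`S` is a `K`-convex monotone semigroup with `S(t)0 ≥ 0` and strongly right-continuous `K`;
`μ` is a linear, positive, sequentially continuous functional on `Y`. If `φ` is differentiable
at `t > 0` with derivative `φ'`, `φ(t)` lies in the domain of the generator of `S` at `t`
(with value `Lφ`), `μ(φ(t)) = μ(S(t)u₀)`, and `φ(s) ≤ S(s)u₀` for all `s > 0`, then
`μ(Lφ) ≤ μ(φ')`. -/
theorem viscosity_supersolution_of_K_convex {X Y : Type*}
    [Lattice X] [AddCommGroup X] [Module ℝ X]
    [CovariantClass X X (· + ·) (· ≤ ·)] [PosSMulMono ℝ X]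
    [TopologicalSpace X] [IsTopologicalAddGroup X] [ContinuousSMul ℝ X]
    [Lattice Y] [AddCommGroup Y] [Module ℝ Y]
    [CovariantClass Y Y (· + ·) (· ≤ ·)] [PosSMulMono ℝ Y]
    (ι : X →ₗ[ℝ] Y)
    (hι_order : ∀ u v : X, u ≤ v ↔ ι u ≤ ι v)
    (hι_sup : ∀ u v : X, ι (u ⊔ v) = ι u ⊔ ι v)
    (P : Set (Y → ℝ))
    (hP_nonneg : ∀ p ∈ P, ∀ y : Y, 0 ≤ p y)
    (hP_add : ∀ p ∈ P, ∀ y z : Y, p (y + z) ≤ p y + p z)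
    (hP_smul : ∀ p ∈ P, ∀ (r : ℝ) (y : Y), p (r • y) = |r| * p y)
    (hP_lattice : ∀ p ∈ P, ∀ y z : Y, y ⊔ (-y) ≤ z ⊔ (-z) → p y ≤ p z)
    (hι_seqcont : ∀ (u : ℕ → X) (u₀ : X), Tendsto u atTop (𝓝 u₀) →
      ∀ p ∈ P, Tendsto (fun n => p (ι (u n) - ι u₀)) atTop (𝓝 0))
    (S : ℝ → X → X) (K : ℝ → X → Y)
    (hS0 : ∀ u : X, S 0 u = u)
    (hSsem : ∀ s t : ℝ, 0 ≤ s → 0 ≤ t → ∀ u : X, S t (S s u) = S (t + s) u)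
    (hSmono : ∀ t : ℝ, 0 ≤ t → ∀ u v : X, u ≤ v → S t u ≤ S t v)
    (hKconv : ∀ t : ℝ, 0 ≤ t → ∀ u v : X, ∀ l : ℝ, l ∈ Set.Icc (0 : ℝ) 1 →
      ι (S t (l • u + (1 - l) • v)) ≤ l • ι (S t u) + (1 - l) • K t v)
    (hSpos : ∀ t : ℝ, 0 ≤ t → 0 ≤ S t 0)
    (hKrc : ∀ t : ℕ → ℝ, (∀ n, 0 < t n) → Tendsto t atTop (𝓝 0) →
      ∀ (u : ℕ → X) (u₀ : X), Tendsto u atTop (𝓝 u₀) →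
      ∀ p ∈ P, Tendsto (fun n => p (K (t n) (u n) - ι u₀)) atTop (𝓝 0))
    (μ : Y →ₗ[ℝ] ℝ)
    (hμpos : ∀ y : Y, 0 ≤ y → 0 ≤ μ y)
    (hμcont : ∀ (y : ℕ → Y) (y₀ : Y),
      (∀ p ∈ P, Tendsto (fun n => p (y n - y₀)) atTop (𝓝 0)) →
      Tendsto (fun n => μ (y n)) atTop (𝓝 (μ y₀)))
    (u₀ : X) (t : ℝ) (ht : 0 < t)
    (φ : ℝ → X) (φ' : X)
    (hφdiff : ∀ h : ℕ → ℝ, (∀ n, h n ≠ 0 ∧ 0 < t + h n) → Tendsto h atTop (𝓝 0) →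
      Tendsto (fun n => (h n)⁻¹ • (φ (t + h n) - φ t)) atTop (𝓝 φ'))
    (Lφ : Y)
    (hLφ : ∀ h : ℕ → ℝ, (∀ n, 0 < h n) → Tendsto h atTop (𝓝 0) →
      ∀ p ∈ P, Tendsto
        (fun n => p ((h n)⁻¹ • (ι (S (h n) (φ t)) - ι (φ t)) - Lφ)) atTop (𝓝 0))
    (htouch : μ (ι (φ t)) = μ (ι (S t u₀)))
    (hbelow : ∀ s : ℝ, 0 < s → φ s ≤ S s u₀) :
    μ Lφ ≤ μ (ι φ') := by
  classical
  -- monotonicity of μ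
  have μmono : ∀ a b : Y, a ≤ b → μ a ≤ μ b := by
    intro a b hab
    have h0 := hμpos (b - a) (sub_nonneg.mpr hab)
    rw [map_sub] at h0
    linarith
  set δ : ℝ := min t 1 / 2 with hδdef
  have hδpos : 0 < δ := by
    have : 0 < min t 1 := lt_min ht one_pos
    positivity
  have hδt : δ < t := by
    have h1 : min t 1 ≤ t := min_le_left _ _
    rw [hδdef]; linarith
  have hδ1 : δ < 1 := by
    have h1 : min t 1 ≤ 1 := min_le_right _ _
    rw [hδdef]; linarith
  set h : ℕ → ℝ := fun n => δ / (n + 1) with hhdef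
  have hhpos : ∀ n, 0 < h n := fun n => div_pos hδpos (by positivity)
  have hhle : ∀ n, h n ≤ δ := by
    intro n
    rw [hhdef]
    apply div_le_self hδpos.le
    have : (0:ℝ) ≤ (n:ℝ) := Nat.cast_nonneg n
    linarith
  have hht : ∀ n, h n < t := fun n => lt_of_le_of_lt (hhle n) hδt
  have hh1 : ∀ n, h n < 1 := fun n => lt_of_le_of_lt (hhle n) hδ1
  have hh0 : Tendsto h atTop (𝓝 0) := by
    have h1 : Tendsto (fun n : ℕ => (n : ℝ) + 1) atTop atTop :=
      tendsto_atTop_add_const_right _ 1 tendsto_natCast_atTop_atTop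
    have h2 := h1.inv_tendsto_atTop
    have h3 := h2.const_mul δ
    rw [mul_zero] at h3
    refine h3.congr fun n => ?_
    rw [hhdef]; simp [div_eq_mul_inv]
  -- difference quotients from the left
  have hd : Tendsto (fun n => (h n)⁻¹ • (φ t - φ (t - h n))) atTop (𝓝 φ') := by
    have h1 := hφdiff (fun n => -h n)
      (fun n => ⟨neg_ne_zero.mpr (hhpos n).ne', by show 0 < t + -h n; linarith [hht n]⟩)
      (by simpa using hh0.neg)
    refine h1.congr fun n => ?_
    rw [show t + -h n = t - h n from (sub_eq_add_neg t (h n)).symm,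
      inv_neg, neg_smul, ← smul_neg, neg_sub]
  have hw : Tendsto (fun n => φ (t - h n)) atTop (𝓝 (φ t)) := by
    have h1 : Tendsto (fun n => h n • ((h n)⁻¹ • (φ t - φ (t - h n)))) atTop
        (𝓝 ((0:ℝ) • φ')) := hh0.smul hd
    rw [zero_smul] at h1
    have h2 := (tendsto_const_nhds (x := φ t) (f := atTop)).sub h1
    rw [sub_zero] at h2
    refine h2.congr fun n => ?_
    rw [smul_inv_smul₀ (hhpos n).ne']
    abel
  have hv : Tendsto (fun n => φ (t - h n) + (h n)⁻¹ • (φ t - φ (t - h n))) atTop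
      (𝓝 (φ t + φ')) := hw.add hd
  have hwneg : Tendsto (fun n => -φ (t - h n)) atTop (𝓝 (-φ t)) := hw.neg
  -- limits of the three μ-sequences
  have hA : Tendsto (fun n => μ ((h n)⁻¹ • (ι (S (h n) (φ t)) - ι (φ t)))) atTop
      (𝓝 (μ Lφ)) :=
    hμcont _ Lφ (fun p hp => hLφ h hhpos hh0 p hp)
  have hB1 : Tendsto (fun n => μ (K (h n) (φ (t - h n) + (h n)⁻¹ • (φ t - φ (t - h n)))))
      atTop (𝓝 (μ (ι (φ t + φ')))) :=
    hμcont _ _ (fun p hp => hKrc h hhpos hh0 _ _ hv p hp)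
  have hB2 : Tendsto (fun n => μ (K (h n) (-φ (t - h n)))) atTop (𝓝 (μ (ι (-φ t)))) :=
    hμcont _ _ (fun p hp => hKrc h hhpos hh0 _ _ hwneg p hp)
  -- pointwise inequality
  have key : ∀ n, μ ((h n)⁻¹ • (ι (S (h n) (φ t)) - ι (φ t))) ≤
      μ (K (h n) (φ (t - h n) + (h n)⁻¹ • (φ t - φ (t - h n)))) +
      μ (K (h n) (-φ (t - h n))) := by
    intro n
    set hn : ℝ := h n with hhn
    have hnpos : 0 < hn := hhpos n
    have hn1 : hn < 1 := hh1 n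
    have hnt : hn < t := hht n
    set w : X := φ (t - hn) with hwdef
    set v : X := w + hn⁻¹ • (φ t - w) with hvdef
    -- K-convexity with λ = 1 - hn
    have kconv := hKconv hn hnpos.le w v (1 - hn) ⟨by linarith, by linarith⟩
    have harg : (1 - hn) • w + (1 - (1 - hn)) • v = φ t := by
      rw [hvdef, show (1 - (1 - hn)) = hn by ring, smul_add,
        smul_inv_smul₀ hnpos.ne']
      module
    rw [harg, show (1 - (1 - hn)) = hn by ring] at kconv
    -- lower bound for S hn w via λ = 1/2
    have kl := hKconv hn hnpos.le w (-w) (1/2) ⟨by norm_num, by norm_num⟩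
    have harg2 : (1/2 : ℝ) • w + (1 - 1/2 : ℝ) • (-w) = 0 := by module
    rw [harg2, show (1 - 1/2 : ℝ) = 1/2 by norm_num] at kl
    have hS0pos : (0:Y) ≤ ι (S hn 0) := by
      have h1 := (hι_order 0 (S hn 0)).mp (hSpos hn hnpos.le)
      rwa [map_zero] at h1
    have hlow : -ι (S hn w) ≤ K hn (-w) := by
      have h1 : (0:Y) ≤ (1/2 : ℝ) • ι (S hn w) + (1/2 : ℝ) • K hn (-w) :=
        le_trans hS0pos kl
      have h2 := smul_le_smul_of_nonneg_left h1 (by norm_num : (0:ℝ) ≤ 2)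
      rw [smul_zero, smul_add, smul_smul, smul_smul] at h2
      norm_num at h2
      rwa [← sub_nonneg, sub_neg_eq_add, add_comm]
    -- comparison with the trajectory
    have hSle : S hn w ≤ S t u₀ := by
      have h1 := hSmono hn hnpos.le w (S (t - hn) u₀) (hbelow (t - hn) (by linarith))
      rwa [hSsem (t - hn) hn (by linarith) hnpos.le,
        show hn + (t - hn) = t by ring] at h1
    -- real arithmetic
    have ha : μ (ι (S hn (φ t))) ≤
        (1 - hn) * μ (ι (S hn w)) + hn * μ (K hn v) := by
      have h1 := μmono _ _ kconv
      rwa [map_add, map_smul, map_smul, smul_eq_mul, smul_eq_mul] at h1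
    have hb : -μ (ι (S hn w)) ≤ μ (K hn (-w)) := by
      have h1 := μmono _ _ hlow
      rwa [map_neg] at h1
    have hc : μ (ι (S hn w)) ≤ μ (ι (φ t)) := by
      have h1 := μmono _ _ ((hι_order _ _).mp hSle)
      rwa [← htouch] at h1
    have hprod : hn * (-μ (ι (S hn w))) ≤ hn * μ (K hn (-w)) :=
      mul_le_mul_of_nonneg_left hb hnpos.le
    have habk : μ (ι (S hn (φ t))) - μ (ι (φ t)) ≤
        hn * (μ (K hn v) + μ (K hn (-w))) := by nlinarith [ha, hc, hprod]
    rw [map_smul, map_sub, smul_eq_mul]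
    calc hn⁻¹ * (μ (ι (S hn (φ t))) - μ (ι (φ t)))
        ≤ hn⁻¹ * (hn * (μ (K hn v) + μ (K hn (-w)))) :=
          mul_le_mul_of_nonneg_left habk (inv_nonneg.mpr hnpos.le)
      _ = μ (K hn v) + μ (K hn (-w)) := by
          rw [← mul_assoc, inv_mul_cancel₀ hnpos.ne', one_mul]
  have final := le_of_tendsto_of_tendsto' hA (hB1.add hB2) key
  have hsimp : μ (ι (φ t + φ')) + μ (ι (-φ t)) = μ (ι φ') := by
    rw [map_add ι, map_neg ι, map_add μ, map_neg μ]
    ring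
  linarith [final, hsimp.symm ▸ final]
end
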